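/- arXiv:2112.08891 — 6 statements merged into one kernel-verified Lean document; each statement's English description precedes it below -/
import Mathlib

section
/- Let (i,k), (j,ℓ) ∈ Q_n with k ≠ i+1, j ≥ i+2 and ℓ ≥ j. Then (i,k) ≺ (j,ℓ). -/
/-- Membership in `Q_n`: pairs `(i,k)` with `1 ≤ i ≤ k ≤ n`. -/
def Qmem (n : ℕ) (p : ℕ × ℕ) : Prop := 1 ≤ p.1 ∧ p.1 ≤ p.2 ∧ p.2 ≤ n

/-- The relation `≺₀` on `Q_n`. -/
def prec0 (n : ℕ) (p q : ℕ × ℕ) : Prop :=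
  Qmem n p ∧ Qmem n q ∧ q.1 = p.1 + 1 ∧
  ( p.2 = p.1 ∨
    (∃ k : ℕ, 1 ≤ k ∧ p.2 = p.1 + 2 * k ∧ ∃ l < k, q.2 = p.1 + 1 + 2 * l) ∨
    (∃ k : ℕ, 1 ≤ k ∧ p.2 = p.1 + 2 * k ∧ p.1 + 2 * k + 1 ≤ q.2) ∨
    (∃ k : ℕ, 1 ≤ k ∧ p.2 = p.1 + 2 * k + 1 ∧ ∃ l < k, q.2 = p.1 + 1 + 2 * l) )

/-- The relation `≺`, the transitive closure of `≺₀`. -/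
def prec (n : ℕ) : ℕ × ℕ → ℕ × ℕ → Prop := Relation.TransGen (prec0 n)

/-- An antichain in `(Q_n, ≺)`: a subset of `Q_n` no two distinct elements
of which are related by `≺` (in either direction). -/
def IsPrecAntichain (n : ℕ) (A : Set (ℕ × ℕ)) : Prop :=
  (∀ p ∈ A, Qmem n p) ∧ ∀ p ∈ A, ∀ q ∈ A, p ≠ q → ¬ prec n p q

/-- Diagonal single step: `(a,a) ≺₀ (a+1,m)` for `a+1 ≤ m ≤ n`. -/
lemma diag_step (n a m : ℕ) (ha : 1 ≤ a) (ham : a + 1 ≤ m) (hmn : m ≤ n) :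
    prec0 n (a, a) (a + 1, m) := by
  refine ⟨⟨ha, le_refl a, ?_⟩, ⟨by omega, ham, hmn⟩, rfl, Or.inl rfl⟩
  omega

/-- Chain along the diagonal: `(a,a) ≺ (b,l)` for `a < b ≤ l ≤ n`. -/
lemma diag_prec (n a : ℕ) (ha : 1 ≤ a) :
    ∀ b, a + 1 ≤ b → ∀ l, b ≤ l → l ≤ n → prec n (a, a) (b, l) := by
  intro b hab
  induction b, hab using Nat.le_induction with
  | base =>
    intro l hbl hln
    exact Relation.TransGen.single (diag_step n a l ha hbl hln)
  | succ b hb ih =>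
    intro l hbl hln
    have h1 : prec n (a, a) (b, b) := ih b le_rfl (by omega)
    exact h1.tail (diag_step n b l (by omega) hbl hln)

/-- First step: from `(i,k)` with `k ≠ i+1` we can reach `(i+1, i+1)`. -/
lemma first_step (n i k : ℕ) (hp : Qmem n (i, k)) (hk : k ≠ i + 1)
    (hin : i + 1 ≤ n) : prec0 n (i, k) (i + 1, i + 1) := by
  obtain ⟨hi, hik, hkn⟩ := hp
  simp only [Qmem] at hi hik hkn ⊢
  refine ⟨⟨hi, hik, hkn⟩, ⟨by omega, le_refl _, hin⟩, rfl, ?_⟩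
  rcases Nat.lt_or_ge k (i + 1) with h | h
  · left; omega
  · have h2 : i + 2 ≤ k := by omega
    rcases Nat.even_or_odd (k - i) with ⟨c, hc⟩ | ⟨c, hc⟩
    · right; left
      exact ⟨c, by omega, by omega, 0, by omega, by omega⟩
    · right; right; right
      exact ⟨c, by omega, by omega, 0, by omega, by omega⟩

/-- if `(i,k), (j,ℓ) ∈ Q_n` with `k ≠ i+1`, `j ≥ i+2` and `ℓ ≥ j`,
then `(i,k) ≺ (j,ℓ)`. -/
theorem prec_of_two_below (n : ℕ) (hn : 1 ≤ n) (i k j l : ℕ)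
    (hp : Qmem n (i, k)) (hq : Qmem n (j, l))
    (hk : k ≠ i + 1) (hj : i + 2 ≤ j) (hl : j ≤ l) :
    prec n (i, k) (j, l) := by
  obtain ⟨hj1, hjl, hln⟩ := hq
  have hin : i + 1 ≤ n := by omega
  have h1 := first_step n i k hp hk hin
  have h2 := diag_prec n (i + 1) (by omega) j (by omega) l hl hln
  exact Relation.TransGen.head h1 h2
end

section
/- The set {(i,i+1) : 1 ≤ i ≤ n−1} ∪ {(n,n)} ⊆ Q_n is an antichain of cardinality n with respect to ≺. -/
/-- No element of the antichain set has any outgoing `prec0` edge. -/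
lemma no_out (n : ℕ) (p : ℕ × ℕ)
    (hp : p ∈ ({p : ℕ × ℕ | 1 ≤ p.1 ∧ p.1 ≤ n - 1 ∧ p.2 = p.1 + 1} ∪ {(n, n)})) :
    ∀ q, ¬ prec0 n p q := by
  intro q hq
  obtain ⟨hPp, hPq, hq1, hdisj⟩ := hq
  obtain ⟨h1q, h2q, h3q⟩ := hPq
  rcases hp with ⟨h1, h2, h3⟩ | hp
  · rcases hdisj with h | ⟨k, hk, he, l, hl, _⟩ | ⟨k, hk, he, _⟩ | ⟨k, hk, he, l, hl, _⟩ <;> omega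
  · simp only [Set.mem_singleton_iff] at hp
    subst hp
    simp only at hq1
    omega

/-- the set `{(i,i+1) : 1 ≤ i ≤ n-1} ∪ {(n,n)} ⊆ Q_n` is an antichain
of cardinality `n` with respect to `≺`. -/
theorem projective_antichain (n : ℕ) (hn : 2 ≤ n) :
    IsPrecAntichain n
        ({p : ℕ × ℕ | 1 ≤ p.1 ∧ p.1 ≤ n - 1 ∧ p.2 = p.1 + 1} ∪ {(n, n)}) ∧
      Set.ncard ({p : ℕ × ℕ | 1 ≤ p.1 ∧ p.1 ≤ n - 1 ∧ p.2 = p.1 + 1} ∪ {(n, n)}) = n := by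
  constructor
  · constructor
    · rintro p (⟨h1, h2, h3⟩ | hp)
      · exact ⟨h1, by omega, by omega⟩
      · simp only [Set.mem_singleton_iff] at hp; subst hp
        exact ⟨by omega, le_refl _, le_refl _⟩
    · intro p hp q _ _ hpq
      obtain ⟨x, h, _⟩ := Relation.TransGen.head'_iff.mp hpq
      exact no_out n p hp x h
  · have hset : ({p : ℕ × ℕ | 1 ≤ p.1 ∧ p.1 ≤ n - 1 ∧ p.2 = p.1 + 1} ∪ {(n, n)}) =
        ↑(((Finset.Icc 1 (n-1)).image (fun i => (i, i+1)) ∪ {(n,n)} : Finset (ℕ × ℕ))) := by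
      ext p
      simp only [Set.mem_union, Set.mem_setOf_eq, Set.mem_singleton_iff, Finset.coe_union,
        Finset.coe_image, Finset.coe_Icc, Set.mem_image, Set.mem_Icc, Finset.coe_singleton]
      constructor
      · rintro (⟨h1, h2, h3⟩ | h)
        · exact Or.inl ⟨p.1, ⟨h1, h2⟩, by rw [← h3]⟩
        · exact Or.inr h
      · rintro (⟨i, ⟨h1, h2⟩, rfl⟩ | h)
        · exact Or.inl ⟨h1, h2, rfl⟩
        · exact Or.inr h
    rw [hset, Set.ncard_coe_finset]
    rw [Finset.card_union_of_disjoint, Finset.card_image_of_injective, Finset.card_singleton,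
      Nat.card_Icc]
    · omega
    · intro a b hab
      simpa using congrArg Prod.fst hab
    · simp only [Finset.disjoint_singleton_right, Finset.mem_image, Finset.mem_Icc]
      rintro ⟨i, ⟨h1, h2⟩, he⟩
      have : i = n ∧ i + 1 = n := ⟨congrArg Prod.fst he, congrArg Prod.snd he⟩
      omega
end

section
/- Every antichain A in (Q_n, ≺) of cardinality n contains an element whose second coordinate is n; that is, there exists j with (j,n) ∈ A. -/
/-! ### Auxiliary material -/

/-- A chain-colouring of `Q_n` with at most `n` colours. -/
def fcol (n : ℕ) (p : ℕ × ℕ) : ℕ :=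
  if p.1 % 2 = 1 then p.2
  else if p.2 % 2 = 1 then p.2 - 2
  else if p.2 + 2 ≤ n then p.2 + 2
  else if n % 2 = 1 then n else n - 1

lemma fcol_range (n : ℕ) (p : ℕ × ℕ) (hp : Qmem n p) : 1 ≤ fcol n p ∧ fcol n p ≤ n := by
  obtain ⟨h1, h2, h3⟩ := hp
  simp only [fcol]
  split_ifs <;> omega

/-- Arithmetic sufficient condition for `prec0` (for pairs in adjacent columns). -/
lemma prec0_of (n : ℕ) (p q : ℕ × ℕ) (hp : Qmem n p) (hq : Qmem n q) (h1 : q.1 = p.1 + 1)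
    (h : p.2 = p.1 ∨
      (p.1 + 2 ≤ p.2 ∧ (p.2 - p.1) % 2 = 0 ∧
        (p.2 + 1 ≤ q.2 ∨ (q.2 < p.2 ∧ (q.2 - p.1) % 2 = 1))) ∨
      (p.1 + 3 ≤ p.2 ∧ (p.2 - p.1) % 2 = 1 ∧ q.2 < p.2 ∧ (q.2 - p.1) % 2 = 1)) :
    prec0 n p q := by
  obtain ⟨hp1, hp2, hp3⟩ := hp
  obtain ⟨hq1, hq2, hq3⟩ := hq
  refine ⟨⟨hp1, hp2, hp3⟩, ⟨hq1, hq2, hq3⟩, h1, ?_⟩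
  rcases h with h | ⟨h2, h3, h4 | ⟨h4, h5⟩⟩ | ⟨h2, h3, h4, h5⟩
  · exact Or.inl h
  · exact Or.inr (Or.inr (Or.inl ⟨(p.2 - p.1) / 2, by omega, by omega, by omega⟩))
  · exact Or.inr (Or.inl ⟨(p.2 - p.1) / 2, by omega, by omega,
      (q.2 - p.1 - 1) / 2, by omega, by omega⟩)
  · exact Or.inr (Or.inr (Or.inr ⟨(p.2 - p.1 - 1) / 2, by omega, by omega,
      (q.2 - p.1 - 1) / 2, by omega, by omega⟩))

set_option maxHeartbeats 2000000 in
/-- Same-colour pairs in adjacent columns are related by `≺₀`. -/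
lemma adj_prec0 (n : ℕ) (p q : ℕ × ℕ) (hp : Qmem n p) (hq : Qmem n q)
    (h1 : q.1 = p.1 + 1) (hf : fcol n p = fcol n q) : prec0 n p q := by
  apply prec0_of n p q hp hq h1
  obtain ⟨hp1, hp2, hp3⟩ := hp
  obtain ⟨hq1, hq2, hq3⟩ := hq
  simp only [fcol] at hf
  split_ifs at hf <;> omega

set_option maxHeartbeats 2000000 in
/-- Same-colour pairs in the same column are equal. -/
lemma col_eq (n : ℕ) (p q : ℕ × ℕ) (hp : Qmem n p) (hq : Qmem n q)
    (h1 : p.1 = q.1) (hf : fcol n p = fcol n q) : p.2 = q.2 := by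
  obtain ⟨hp1, hp2, hp3⟩ := hp
  obtain ⟨hq1, hq2, hq3⟩ := hq
  simp only [fcol] at hf
  split_ifs at hf <;> omega

set_option maxHeartbeats 2000000 in
/-- A colour class contains nothing two or more columns beyond a gap-one element. -/
lemma gap1_max (n : ℕ) (p q : ℕ × ℕ) (hp : Qmem n p) (hq : Qmem n q)
    (hgap : p.2 = p.1 + 1) (hj : p.1 + 2 ≤ q.1) (hf : fcol n p = fcol n q) : False := by
  obtain ⟨hp1, hp2, hp3⟩ := hp
  obtain ⟨hq1, hq2, hq3⟩ := hq
  simp only [fcol] at hf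
  split_ifs at hf <;> omega

/-- Walking along the diagonal: `(r,r) ≺ (r+d+1, m)`. -/
lemma diag_prec_s6 (n : ℕ) : ∀ (d r m : ℕ), 1 ≤ r → r + d + 1 ≤ m → m ≤ n →
    prec n (r, r) (r + d + 1, m) := by
  intro d
  induction d with
  | zero =>
    intro r m h1 h2 h3
    exact Relation.TransGen.single
      ⟨⟨h1, le_refl _, by omega⟩, ⟨by omega, h2, h3⟩, rfl, Or.inl rfl⟩
  | succ d ih =>
    intro r m h1 h2 h3
    have step : prec0 n (r, r) (r + 1, r + 1) :=
      ⟨⟨h1, le_refl _, by omega⟩, ⟨by omega, le_refl _, by omega⟩, rfl, Or.inl rfl⟩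
    have tail := ih (r + 1) m (by omega) (by omega) h3
    have e : r + (d + 1) + 1 = r + 1 + d + 1 := by omega
    rw [e]
    exact Relation.TransGen.head step tail

/-- Any element whose gap is not one precedes everything two or more columns further. -/
lemma reach_far (n : ℕ) (p q : ℕ × ℕ) (hp : Qmem n p) (hq : Qmem n q)
    (hk : p.2 ≠ p.1 + 1) (hj : p.1 + 2 ≤ q.1) : prec n p q := by
  obtain ⟨hp1, hp2, hp3⟩ := hp
  obtain ⟨hq1, hq2, hq3⟩ := hq
  have step : prec0 n p (p.1 + 1, p.1 + 1) := by
    refine prec0_of n p (p.1 + 1, p.1 + 1) ⟨hp1, hp2, hp3⟩ ?_ rfl ?_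
    · exact ⟨by omega, le_refl _, by omega⟩
    · dsimp only
      omega
  have tail := diag_prec_s6 n (q.1 - p.1 - 2) (p.1 + 1) q.2 (by omega) (by omega) hq3
  have e : (p.1 + 1) + (q.1 - p.1 - 2) + 1 = q.1 := by omega
  rw [e] at tail
  have : (q.1, q.2) = q := rfl
  rw [this] at tail
  exact Relation.TransGen.head step tail

/-- Same-colour distinct elements with increasing first coordinates are comparable. -/
lemma key_prec (n : ℕ) (p q : ℕ × ℕ) (hp : Qmem n p) (hq : Qmem n q)
    (hf : fcol n p = fcol n q) (hlt : p.1 < q.1) : prec n p q := by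
  rcases Nat.lt_or_ge q.1 (p.1 + 2) with h | h
  · exact Relation.TransGen.single (adj_prec0 n p q hp hq (by omega) hf)
  · have hk : p.2 ≠ p.1 + 1 := fun hcon => gap1_max n p q hp hq hcon (by omega) hf
    exact reach_far n p q hp hq hk h

/-- Every antichain in `Q_n` has at most `n` elements. -/
theorem antichain_card_le (n : ℕ) (A : Set (ℕ × ℕ)) (hA : IsPrecAntichain n A) :
    A.ncard ≤ n := by
  obtain ⟨hQ, hanti⟩ := hA
  have hinj : Set.InjOn (fcol n) A := by
    intro p hp q hq hfe
    by_contra hne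
    rcases lt_trichotomy p.1 q.1 with h | h | h
    · exact hanti p hp q hq hne (key_prec n p q (hQ p hp) (hQ q hq) hfe h)
    · have h2 := col_eq n p q (hQ p hp) (hQ q hq) h hfe
      exact hne (Prod.ext h h2)
    · exact hanti q hq p hp (Ne.symm hne) (key_prec n q p (hQ q hq) (hQ p hp) hfe.symm h)
  have hsub : fcol n '' A ⊆ (Finset.Icc 1 n : Set ℕ) := by
    rintro x ⟨p, hp, rfl⟩
    have := fcol_range n p (hQ p hp)
    simp only [Finset.coe_Icc, Set.mem_Icc]
    exact this
  calc A.ncard = (fcol n '' A).ncard := (Set.ncard_image_of_injOn hinj).symm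
    _ ≤ ((Finset.Icc 1 n : Set ℕ)).ncard :=
        Set.ncard_le_ncard hsub (Finset.Icc 1 n).finite_toSet
    _ = n := by rw [Set.ncard_coe_finset, Nat.card_Icc]; omega

lemma prec_mono {m n : ℕ} (h : m ≤ n) {p q : ℕ × ℕ} (hpq : prec m p q) : prec n p q := by
  refine Relation.TransGen.mono (show ∀ a b, prec0 m a b → prec0 n a b from fun a b hab => ?_) p q hpq
  obtain ⟨⟨a1, a2, a3⟩, ⟨b1, b2, b3⟩, hc, hd⟩ := hab
  exact ⟨⟨a1, a2, a3.trans h⟩, ⟨b1, b2, b3.trans h⟩, hc, hd⟩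

/-- every antichain `A` of cardinality `n` in `(Q_n, ≺)` contains an
element whose second coordinate is `n`. -/
theorem antichain_contains_second_coord_n (n : ℕ) (hn : 2 ≤ n) (A : Set (ℕ × ℕ))
    (hA : IsPrecAntichain n A) (hcard : A.ncard = n) :
    ∃ j : ℕ, (j, n) ∈ A := by
  by_contra hcon
  push_neg at hcon
  have hsub : ∀ p ∈ A, Qmem (n - 1) p := by
    intro p hp
    obtain ⟨h1, h2, h3⟩ := hA.1 p hp
    refine ⟨h1, h2, ?_⟩
    have hne : p.2 ≠ n := by
      intro hpn
      have : (p.1, n) = p := by rw [← hpn]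
      exact hcon p.1 (this ▸ hp)
    omega
  have hA' : IsPrecAntichain (n - 1) A :=
    ⟨hsub, fun p hp q hq hne hpr => hA.2 p hp q hq hne (prec_mono (by omega) hpr)⟩
  have := antichain_card_le (n - 1) A hA'
  omega
end

section
/- Let A be an antichain in (Q_n, ≺) of cardinality n. Then there exists an index i with 1 ≤ i ≤ n−1 such that every element of A is of the form (i,k), (i+1,ℓ), or (j,j+1) with j < i. -/
/-- Any element with offset ≠ 1 steps to the next diagonal element. -/
lemma offstep (n : ℕ) (b : ℕ × ℕ) (hb : Qmem n b) (hoff : b.2 ≠ b.1 + 1)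
    (h : b.1 + 1 ≤ n) : prec0 n b (b.1 + 1, b.1 + 1) := by
  obtain ⟨h1, h2, h3⟩ := hb
  refine ⟨⟨h1, h2, h3⟩, ⟨by omega, le_refl _, h⟩, rfl, ?_⟩
  rcases Nat.lt_or_ge b.2 (b.1 + 2) with hlt | hge
  · left; omega
  · rcases Nat.even_or_odd (b.2 - b.1) with ⟨k, hk⟩ | ⟨k, hk⟩
    · right; left; exact ⟨k, by omega, by omega, 0, by omega, by omega⟩
    · right; right; right; exact ⟨k, by omega, by omega, 0, by omega, by omega⟩

/-- A diagonal element steps to anything in the next row. -/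
lemma diagstep (n j m : ℕ) (h1 : 1 ≤ j) (h2 : j + 1 ≤ m) (h3 : m ≤ n) :
    prec0 n (j, j) (j + 1, m) :=
  ⟨⟨h1, le_refl _, by omega⟩, ⟨by omega, h2, h3⟩, rfl, Or.inl rfl⟩

/-- Key lemma: an element with offset ≠ 1 precedes everything at least
two rows below it. -/
lemma key (n : ℕ) (b p : ℕ × ℕ) (hb : Qmem n b) (hp : Qmem n p)
    (hoff : b.2 ≠ b.1 + 1) (h : b.1 + 2 ≤ p.1) : prec n b p := by
  obtain ⟨hp1, hp2, hp3⟩ := hp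
  have hb1 := hb.1
  have claim : ∀ r, b.1 + 1 ≤ r → r ≤ n → prec n b (r, r) := by
    intro r hr
    induction r, hr using Nat.le_induction with
    | base =>
        intro h'
        exact Relation.TransGen.single (offstep n b hb hoff h')
    | succ r hr ih =>
        intro h'
        exact Relation.TransGen.tail (ih (by omega))
          (diagstep n r (r + 1) (by omega) le_rfl h')
  have h4 : prec n b (p.1 - 1, p.1 - 1) := claim (p.1 - 1) (by omega) (by omega)
  have h5 : prec0 n (p.1 - 1, p.1 - 1) p := by
    have hd := diagstep n (p.1 - 1) p.2 (by omega) (by omega) hp3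
    have e : p.1 - 1 + 1 = p.1 := by omega
    rw [e] at hd
    simpa using hd
  exact Relation.TransGen.tail h4 h5

/-- every antichain `A` of cardinality `n` in `(Q_n, ≺)` lies in some tier:
there is `1 ≤ i ≤ n-1` such that each element of `A` is of the form `(i,k)`,
`(i+1,ℓ)`, or `(j,j+1)` with `j < i`. -/
theorem antichain_in_tier (n : ℕ) (hn : 2 ≤ n) (A : Set (ℕ × ℕ))
    (hA : IsPrecAntichain n A) (hcard : A.ncard = n) :
    ∃ i : ℕ, 1 ≤ i ∧ i ≤ n - 1 ∧
      ∀ p ∈ A, p.1 = i ∨ p.1 = i + 1 ∨ (p.1 < i ∧ p.2 = p.1 + 1) := by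
  classical
  obtain ⟨hQ, hanti⟩ := hA
  by_cases hS : ∃ r : ℕ, ∃ p ∈ A, p.1 = r ∧ p.2 ≠ p.1 + 1 ∧ p.1 ≤ n - 1
  · set i := Nat.find hS with hidef
    obtain ⟨b, hbA, hbr, hboff, hble⟩ := Nat.find_spec hS
    have hmin : ∀ r < i, ¬ ∃ p ∈ A, p.1 = r ∧ p.2 ≠ p.1 + 1 ∧ p.1 ≤ n - 1 :=
      fun r hr => Nat.find_min hS hr
    obtain ⟨hb1, hb2, hb3⟩ := hQ b hbA
    have hbQ : Qmem n b := ⟨hb1, hb2, hb3⟩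
    refine ⟨i, by omega, by omega, ?_⟩
    intro p hpA
    have hpQ := hQ p hpA
    rcases Nat.lt_or_ge p.1 i with hlt | hge
    · by_cases hpd : p.2 = p.1 + 1
      · exact Or.inr (Or.inr ⟨hlt, hpd⟩)
      · exact absurd ⟨p, hpA, rfl, hpd, by omega⟩ (hmin p.1 hlt)
    · rcases Nat.lt_or_ge p.1 (i + 2) with hlt2 | hge2
      · obtain ⟨a1, a2, a3⟩ := hpQ
        omega
      · exfalso
        have hprec : prec n b p := key n b p hbQ hpQ hboff (by omega)
        have hne : b ≠ p := by
          intro he; rw [he] at hbr; omega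
        exact hanti b hbA p hpA hne hprec
  · refine ⟨n - 1, by omega, le_rfl, ?_⟩
    intro p hpA
    obtain ⟨a1, a2, a3⟩ := hQ p hpA
    by_cases hpd : p.2 = p.1 + 1
    · omega
    · have hgt : n - 1 < p.1 := by
        by_contra hc
        push_neg at hc
        exact hS ⟨p.1, p, hpA, rfl, hpd, hc⟩
      omega
end

section
/- The number of antichains of cardinality n in the graded poset (Q_n, ≺) is exactly n(n−1)/2 + 1. -/
namespace CA

/-- Adjacent-row comparability condition for `p=(i,k)` with `k ≥ i+2`, `q=(i+1,l)`. -/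
def AdjC (i k l : ℕ) : Prop :=
  ((l - i) % 2 = 1 ∧ ((k - i) % 2 = 0 ∨ l < k)) ∨ ((k - i) % 2 = 0 ∧ k < l)

/-- Closed form of the transitive closure `prec`. -/
def Comp (n : ℕ) (p q : ℕ × ℕ) : Prop :=
  Qmem n p ∧ Qmem n q ∧ p.1 < q.1 ∧ p.2 ≠ p.1 + 1 ∧
    (q.1 = p.1 + 1 → p.1 + 2 ≤ p.2 → AdjC p.1 p.2 q.2)

theorem comp_trans {n : ℕ} {p x q : ℕ × ℕ} (h1 : Comp n p x) (h2 : Comp n x q) :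
    Comp n p q := by
  obtain ⟨hp, hx, h1lt, h1ne, _⟩ := h1
  obtain ⟨_, hq, h2lt, _, _⟩ := h2
  exact ⟨hp, hq, h1lt.trans h2lt, h1ne, fun h _ => absurd h (by omega)⟩

theorem prec0_comp {n : ℕ} {p q : ℕ × ℕ} (h : prec0 n p q) : Comp n p q := by
  obtain ⟨hp, hq, hrow, hc⟩ := h
  refine ⟨hp, hq, by omega, ?_, ?_⟩
  · rcases hc with h | ⟨k, hk, h, l, hl, h'⟩ | ⟨k, hk, h, h'⟩ | ⟨k, hk, h, l, hl, h'⟩ <;> omega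
  · intro _ hk2
    rcases hc with h | ⟨k, hk, h, l, hl, h'⟩ | ⟨k, hk, h, h'⟩ | ⟨k, hk, h, l, hl, h'⟩
    · omega
    · exact Or.inl (by omega)
    · rcases Nat.even_or_odd (q.2 - p.1) with he | ho
      · exact Or.inr ⟨by omega, by rcases he with ⟨m, hm⟩; omega⟩
      · exact Or.inl ⟨by rcases ho with ⟨m, hm⟩; omega, Or.inl (by omega)⟩
    · exact Or.inl ⟨by omega, Or.inr (by omega)⟩

/-- From Comp with adjacent rows, get prec0 directly. -/
theorem comp_adj_prec0 {n : ℕ} {p q : ℕ × ℕ} (h : Comp n p q) (hadj : q.1 = p.1 + 1) :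
    prec0 n p q := by
  obtain ⟨hp, hq, hlt, hne, hA⟩ := h
  have hi := hp.1; have hik := hp.2.1; have hkn := hp.2.2
  have hjl := hq.2.1; have hln := hq.2.2
  refine ⟨hp, hq, hadj, ?_⟩
  rcases Nat.lt_or_ge p.2 (p.1 + 2) with hk | hk
  · exact Or.inl (by omega)
  · have hA' := hA hadj hk
    rcases hA' with ⟨hlo, hdisj⟩ | ⟨hke, hkl⟩
    · -- l - i odd
      rcases Nat.even_or_odd (p.2 - p.1) with hke | hko
      · -- k even offset
        rcases Nat.lt_or_ge q.2 p.2 with hlk | hlk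
        · -- clause 2
          refine Or.inr (Or.inl ⟨(p.2 - p.1) / 2, ?_, ?_, (q.2 - p.1 - 1) / 2, ?_, ?_⟩) <;>
            · rcases hke with ⟨m, hm⟩; omega
        · -- l ≥ k, l ≠ k by parity; clause 3
          refine Or.inr (Or.inr (Or.inl ⟨(p.2 - p.1) / 2, ?_, ?_, ?_⟩)) <;>
            · rcases hke with ⟨m, hm⟩; omega
      · -- k odd offset: need l < k; clause 4
        have hlk : q.2 < p.2 := by
          rcases hdisj with h | h
          · exfalso; rcases hko with ⟨m, hm⟩; omega
          · exact h
        refine Or.inr (Or.inr (Or.inr ⟨(p.2 - p.1 - 1) / 2, ?_, ?_, (q.2 - p.1 - 1) / 2, ?_, ?_⟩)) <;>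
          · rcases hko with ⟨m, hm⟩; omega
    · -- k even offset, l > k : clause 3
      refine Or.inr (Or.inr (Or.inl ⟨(p.2 - p.1) / 2, ?_, ?_, ?_⟩)) <;> omega

/-- `(a,a)` is prec0-below each element of row `a+1`. -/
theorem diag_prec0 {n : ℕ} {a : ℕ} {q : ℕ × ℕ} (ha : 1 ≤ a) (han : a ≤ n)
    (hq : Qmem n q) (hrow : q.1 = a + 1) : prec0 n (a, a) q :=
  ⟨⟨ha, le_refl a, han⟩, hq, hrow, Or.inl rfl⟩

theorem diag_chain {n : ℕ} {a : ℕ} (ha : 1 ≤ a) :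
    ∀ b, a < b → ∀ l, Qmem n (b, l) → prec n (a, a) (b, l) := by
  intro b
  induction b with
  | zero => omega
  | succ b ih =>
    intro hab l hq
    rcases Nat.lt_or_ge a b with h | h
    · have hq' : Qmem n (b, b) := ⟨by omega, le_refl b, by obtain ⟨_, h1, h2⟩ := hq; omega⟩
      exact (ih h b hq').tail (diag_prec0 (by omega) (by obtain ⟨_, h1, h2⟩ := hq; omega) hq rfl)
    · have hab' : a = b := by omega
      subst hab'
      exact Relation.TransGen.single (diag_prec0 ha (by obtain ⟨_, h1, h2⟩ := hq; omega) hq rfl)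

theorem comp_prec {n : ℕ} {p q : ℕ × ℕ} (h : Comp n p q) : prec n p q := by
  rcases Nat.lt_or_ge (p.1 + 1) q.1 with hlt | hge
  · -- go through the diagonal
    obtain ⟨hp, hq, _, hne, _⟩ := h
    have h1 : prec0 n p (p.1 + 1, p.1 + 1) := by
      have hmem : Qmem n (p.1 + 1, p.1 + 1) :=
        ⟨by omega, le_refl _, by obtain ⟨_, _, _⟩ := hq; omega⟩
      have hi := hp.1; have hik := hp.2.1; have hkn := hp.2.2
      refine ⟨hp, hmem, rfl, ?_⟩
      rcases Nat.lt_or_ge p.2 (p.1 + 2) with hk | hk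
      · exact Or.inl (by omega)
      · rcases Nat.even_or_odd (p.2 - p.1) with he | ho
        · exact Or.inr (Or.inl ⟨(p.2 - p.1) / 2, by rcases he with ⟨m, hm⟩; omega,
            by rcases he with ⟨m, hm⟩; omega, 0, by rcases he with ⟨m, hm⟩; omega, by omega⟩)
        · exact Or.inr (Or.inr (Or.inr ⟨(p.2 - p.1 - 1) / 2, by rcases ho with ⟨m, hm⟩; omega,
            by rcases ho with ⟨m, hm⟩; omega, 0, by rcases ho with ⟨m, hm⟩; omega, by omega⟩))
    have h2 : prec n (p.1 + 1, p.1 + 1) (q.1, q.2) := diag_chain (by obtain ⟨a,_,_⟩:=hp; omega) q.1 hlt q.2 (by exact hq)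
    exact Relation.TransGen.head h1 h2
  · have hadj : q.1 = p.1 + 1 := by obtain ⟨_, _, hlt, _, _⟩ := h; omega
    exact Relation.TransGen.single (comp_adj_prec0 h hadj)

theorem prec_iff_comp {n : ℕ} {p q : ℕ × ℕ} : prec n p q ↔ Comp n p q := by
  constructor
  · intro h
    induction h with
    | single h => exact prec0_comp h
    | tail _ h ih => exact comp_trans ih (prec0_comp h)
  · exact comp_prec


theorem card_filter_odd (K : ℕ) :
    ((Finset.range K).filter (fun d => d % 2 = 1)).card = K / 2 := by
  induction K with
  | zero => simp
  | succ K ih =>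
    rw [Finset.range_add_one, Finset.filter_insert]
    by_cases h : K % 2 = 1
    · rw [if_pos h, Finset.card_insert_of_notMem (by simp)]
      omega
    · rw [if_neg h]
      omega

theorem card_filter_odd_lt2 (N a b : ℕ) :
    ((Finset.range N).filter (fun d => d % 2 = 1 ∧ d < a ∧ d < b)).card
      = min N (min a b) / 2 := by
  rw [← card_filter_odd (min N (min a b))]
  congr 1
  ext d
  simp only [Finset.mem_filter, Finset.mem_range]
  omega

theorem card_filter_ge (N c : ℕ) :
    ((Finset.range N).filter (fun d => c ≤ d)).card = N - c := by
  have : (Finset.range N).filter (fun d => c ≤ d) = Finset.Ico c N := by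
    ext d
    simp only [Finset.mem_filter, Finset.mem_range, Finset.mem_Ico]
    omega
  rw [this, Nat.card_Ico]

def BF (M t : ℕ) : Finset ℕ :=
  (Finset.range (M+1)).filter
    (fun d => (d % 2 = 1 ∧ d < 2*t ∧ d < 2*(M-t)+2) ∨ 2*t ≤ d)

def CF (M t : ℕ) : Finset ℕ :=
  (Finset.range M).filter
    (fun e => (e % 2 = 1 ∧ e < 2*t ∧ e < 2*(M-t)) ∨ 2*(M-t) ≤ e)

theorem BF_card (M t : ℕ) (ht : t ≤ M) : (BF M t).card = M + 1 - t := by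
  rw [BF, Finset.filter_or, Finset.card_union_of_disjoint (by
    simp only [Finset.disjoint_left, Finset.mem_filter, Finset.mem_range]
    omega)]
  rw [card_filter_odd_lt2, card_filter_ge]
  omega

theorem CF_card (M t : ℕ) (ht : t ≤ M) : (CF M t).card = t := by
  rw [CF, Finset.filter_or, Finset.card_union_of_disjoint (by
    simp only [Finset.disjoint_left, Finset.mem_filter, Finset.mem_range]
    omega)]
  rw [card_filter_odd_lt2, card_filter_ge]
  omega


open Finset

def stairF (r : ℕ) : Finset (ℕ × ℕ) := (Finset.range (r-1)).image (fun i => (i+1, i+2))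

def famF (n r t : ℕ) : Finset (ℕ × ℕ) :=
  stairF r ∪ (BF (n-r) t).image (fun d => (r, r+d))
    ∪ (CF (n-r) t).image (fun e => (r+1, r+1+e))

theorem famF_card (n r t : ℕ) (hr : 1 ≤ r) (hrn : r ≤ n) (ht : t ≤ n - r) :
    (famF n r t).card = n := by
  have hinj1 : Function.Injective (fun i : ℕ => (i+1, i+2)) := by
    intro a b h
    have := (Prod.mk.injEq _ _ _ _ ▸ h).1
    omega
  have hinj2 : Function.Injective (fun d : ℕ => (r, r+d)) := by
    intro a b h
    have := (Prod.mk.injEq _ _ _ _ ▸ h).2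
    omega
  have hinj3 : Function.Injective (fun e : ℕ => (r+1, r+1+e)) := by
    intro a b h
    have := (Prod.mk.injEq _ _ _ _ ▸ h).2
    omega
  rw [famF, Finset.card_union_of_disjoint, Finset.card_union_of_disjoint]
  · rw [stairF, Finset.card_image_of_injective _ hinj1, Finset.card_image_of_injective _ hinj2,
      Finset.card_image_of_injective _ hinj3, Finset.card_range, BF_card _ _ ht, CF_card _ _ ht]
    omega
  · simp only [Finset.disjoint_left, stairF, Finset.mem_image, Finset.mem_range]
    rintro a ⟨i, hi, rfl⟩ ⟨d, hd, had⟩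
    have := (Prod.mk.injEq _ _ _ _ ▸ had).1
    omega
  · simp only [Finset.disjoint_left, Finset.mem_union, stairF, Finset.mem_image,
      Finset.mem_range]
    rintro a (⟨i, hi, rfl⟩ | ⟨d, hd, rfl⟩) ⟨e, he, hae⟩
    · have := (Prod.mk.injEq _ _ _ _ ▸ hae).1
      omega
    · have := (Prod.mk.injEq _ _ _ _ ▸ hae).1
      omega

theorem famF_qmem (n r t : ℕ) (hr : 1 ≤ r) (hrn : r ≤ n) :
    ∀ p ∈ famF n r t, Qmem n p := by
  intro p hp
  simp only [famF, stairF, BF, CF, Finset.mem_union, Finset.mem_image, Finset.mem_filter,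
    Finset.mem_range] at hp
  rcases hp with (⟨i, hi, rfl⟩ | ⟨d, hd, rfl⟩) | ⟨e, he, rfl⟩ <;>
    exact ⟨by omega, by omega, by omega⟩

theorem famF_antichain (n r t : ℕ) (hr : 1 ≤ r) (hrn : r ≤ n) :
    ∀ p ∈ famF n r t, ∀ q ∈ famF n r t, ¬ Comp n p q := by
  intro p hp q hq hc
  obtain ⟨hpQ, hqQ, hlt, hne, hA⟩ := hc
  simp only [famF, stairF, BF, CF, Finset.mem_union, Finset.mem_image, Finset.mem_filter,
    Finset.mem_range] at hp hq
  rcases hp with (⟨i, hi, rfl⟩ | ⟨d, hd, rfl⟩) | ⟨e, he, rfl⟩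
  · exact hne rfl
  · rcases hq with (⟨j, hj, rfl⟩ | ⟨d', hd', rfl⟩) | ⟨e, he, rfl⟩
    · have hlt' : r < j + 1 := hlt
      omega
    · exact absurd hlt (lt_irrefl r)
    · -- main case
      have hne' : r + d ≠ r + 1 := hne
      rcases Nat.eq_zero_or_pos d with rfl | hdpos
      · omega
      · have hA' : AdjC r (r+d) (r+1+e) := hA rfl (by omega)
        rw [AdjC] at hA'
        omega
  · rcases hq with (⟨j, hj, rfl⟩ | ⟨d', hd', rfl⟩) | ⟨e', he', rfl⟩ <;>
      · have hlt' := hlt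
        simp only at hlt'
        omega


/-- Compatibility of offsets `d` (row r) and `e` (row r+1) extracted from incomparability. -/
def Icompat (d e : ℕ) : Prop :=
  d = 1 ∨ (2 ≤ d ∧
    ¬ (((e+1) % 2 = 1 ∧ (d % 2 = 0 ∨ e+1 < d)) ∨ (d % 2 = 0 ∧ d < e+1)))

theorem key_sub (M : ℕ) (B C : Finset ℕ) (hB : B ⊆ Finset.range (M+1))
    (hC : C ⊆ Finset.range M) (h : ∀ d ∈ B, ∀ e ∈ C, Icompat d e) :
    ∃ t ≤ M, B ⊆ BF M t ∧ C ⊆ CF M t := by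
  rcases C.eq_empty_or_nonempty with rfl | ⟨e0, he0⟩
  · refine ⟨0, Nat.zero_le _, ?_, by simp⟩
    intro d hd
    have := Finset.mem_range.mp (hB hd)
    simp only [BF, Finset.mem_filter, Finset.mem_range]
    omega
  · have hM1 : 1 ≤ M := by have := Finset.mem_range.mp (hC he0); omega
    have h0B : 0 ∉ B := by
      intro h0
      have := h 0 h0 e0 he0
      rw [Icompat] at this
      omega
    by_cases hev : ∃ d ∈ B, d % 2 = 0
    · -- minimal even element d0
      set S := B.filter (fun d => d % 2 = 0) with hS
      have hSne : S.Nonempty := by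
        obtain ⟨d, hd, hd2⟩ := hev
        exact ⟨d, Finset.mem_filter.mpr ⟨hd, hd2⟩⟩
      set d0 := S.min' hSne with hd0def
      have hd0S : d0 ∈ S := S.min'_mem hSne
      have hd0B : d0 ∈ B := (Finset.mem_filter.mp hd0S).1
      have hd0even : d0 % 2 = 0 := (Finset.mem_filter.mp hd0S).2
      have hd0min : ∀ x ∈ B, x % 2 = 0 → d0 ≤ x := by
        intro x hx hx2
        exact S.min'_le x (Finset.mem_filter.mpr ⟨hx, hx2⟩)
      have hd0M : d0 ≤ M := by have := Finset.mem_range.mp (hB hd0B); omega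
      have hd0pos : d0 ≠ 0 := by intro hh; exact h0B (hh ▸ hd0B)
      -- every e in C is odd and < d0
      have hCodd : ∀ e ∈ C, e % 2 = 1 ∧ e < d0 := by
        intro e he
        have := h d0 hd0B e he
        rw [Icompat] at this
        omega
      refine ⟨d0 / 2, by omega, ?_, ?_⟩
      · intro d hd
        have hdM := Finset.mem_range.mp (hB hd)
        have h0 : d ≠ 0 := by intro hh; exact h0B (hh ▸ hd)
        simp only [BF, Finset.mem_filter, Finset.mem_range]
        rcases Nat.even_or_odd d with he | ho
        · have : d0 ≤ d := hd0min d hd (by rcases he with ⟨m,hm⟩; omega)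
          omega
        · rcases ho with ⟨m, hm⟩
          omega
      · intro e he
        have heM := Finset.mem_range.mp (hC he)
        have := hCodd e he
        simp only [CF, Finset.mem_filter, Finset.mem_range]
        omega
    · push_neg at hev
      have hodd : ∀ d ∈ B, d % 2 = 1 := by
        intro d hd
        have h0 : d ≠ 0 := by intro hh; exact h0B (hh ▸ hd)
        have := hev d hd
        omega
      by_cases hbig : ∃ d ∈ B, 3 ≤ d
      · have hBne : B.Nonempty := by obtain ⟨d, hd, _⟩ := hbig; exact ⟨d, hd⟩
        set d1 := B.max' hBne with hd1def
        have hd1B : d1 ∈ B := B.max'_mem hBne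
        have hd1max : ∀ x ∈ B, x ≤ d1 := fun x hx => B.le_max' x hx
        have hd13 : 3 ≤ d1 := by obtain ⟨d, hd, h3⟩ := hbig; exact le_trans h3 (hd1max d hd)
        have hd1odd : d1 % 2 = 1 := hodd d1 hd1B
        have hd1M : d1 ≤ M := by have := Finset.mem_range.mp (hB hd1B); omega
        refine ⟨M - (d1 - 1) / 2, by omega, ?_, ?_⟩
        · intro d hd
          have hdM := Finset.mem_range.mp (hB hd)
          have hdo := hodd d hd
          have hdle := hd1max d hd
          simp only [BF, Finset.mem_filter, Finset.mem_range]
          omega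
        · intro e he
          have heM := Finset.mem_range.mp (hC he)
          simp only [CF, Finset.mem_filter, Finset.mem_range]
          rcases Nat.even_or_odd e with hee | heo
          · -- even e must be ≥ d1 - 1
            have := h d1 hd1B e he
            rw [Icompat] at this
            rcases hee with ⟨m, hm⟩
            omega
          · rcases heo with ⟨m, hm⟩
            omega
      · push_neg at hbig
        have hB1 : ∀ d ∈ B, d = 1 := by
          intro d hd
          have := hodd d hd
          have := hbig d hd
          omega
        refine ⟨M, le_refl M, ?_, ?_⟩
        · intro d hd
          have := hB1 d hd
          simp only [BF, Finset.mem_filter, Finset.mem_range]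
          omega
        · intro e he
          have := Finset.mem_range.mp (hC he)
          simp only [CF, Finset.mem_filter, Finset.mem_range]
          omega

theorem key (M : ℕ) (B C : Finset ℕ) (hB : B ⊆ Finset.range (M+1))
    (hC : C ⊆ Finset.range M) (h : ∀ d ∈ B, ∀ e ∈ C, Icompat d e) :
    B.card + C.card ≤ M + 1 ∧
      (B.card + C.card = M + 1 → ∃ t ≤ M, B = BF M t ∧ C = CF M t) := by
  obtain ⟨t, ht, hBt, hCt⟩ := key_sub M B C hB hC h
  have h1 : B.card ≤ M + 1 - t := by
    calc B.card ≤ (BF M t).card := Finset.card_le_card hBt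
    _ = M + 1 - t := BF_card M t ht
  have h2 : C.card ≤ t := by
    calc C.card ≤ (CF M t).card := Finset.card_le_card hCt
    _ = t := CF_card M t ht
  refine ⟨by omega, fun heq => ⟨t, ht, ?_, ?_⟩⟩
  · exact Finset.eq_of_subset_of_card_le hBt (by rw [BF_card M t ht]; omega)
  · exact Finset.eq_of_subset_of_card_le hCt (by rw [CF_card M t ht]; omega)


theorem stairF_card (r : ℕ) : (stairF r).card = r - 1 := by
  rw [stairF, Finset.card_image_of_injective, Finset.card_range]
  intro a b h
  have := (Prod.mk.injEq _ _ _ _ ▸ h).1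
  omega

theorem classify (n : ℕ) (hn : 2 ≤ n) (A : Set (ℕ × ℕ)) (hA : IsPrecAntichain n A)
    (hcard : A.ncard = n) :
    ∃ r t, 1 ≤ r ∧ r ≤ n ∧ t ≤ n - r ∧ A = ↑(famF n r t) := by
  obtain ⟨hQ, hanti⟩ := hA
  -- A is finite
  have hfin : A.Finite := by
    apply Set.Finite.subset (Set.finite_Icc ((0:ℕ),(0:ℕ)) ((n,n)))
    intro p hp
    obtain ⟨h1, h2, h3⟩ := hQ p hp
    exact ⟨⟨by omega, by omega⟩, ⟨by omega, by omega⟩⟩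
  set F := hfin.toFinset with hFdef
  have hFA : ∀ p, p ∈ F ↔ p ∈ A := fun p => hfin.mem_toFinset
  have hFcard : F.card = n := by rw [← hcard, Set.ncard_eq_toFinset_card A hfin]
  have hnc : ∀ p ∈ A, ∀ q ∈ A, ¬ Comp n p q := by
    intro p hp q hq hc
    by_cases hpq : p = q
    · subst hpq; exact absurd hc.2.2.1 (lt_irrefl _)
    · exact hanti p hp q hq hpq (comp_prec hc)
  -- non-staircase elements
  set NS := F.filter (fun p => p.2 ≠ p.1 + 1) with hNSdef
  have hNSne : NS.Nonempty := by
    by_contra hne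
    rw [Finset.not_nonempty_iff_eq_empty] at hne
    have hsub : F ⊆ (Finset.range (n-1)).image (fun i => (i+1, i+2)) := by
      intro p hp
      have hpA := (hFA p).mp hp
      obtain ⟨h1, h2, h3⟩ := hQ p hpA
      have hst : p.2 = p.1 + 1 := by
        by_contra hc
        have : p ∈ NS := Finset.mem_filter.mpr ⟨hp, hc⟩
        rw [hne] at this
        exact absurd this (Finset.notMem_empty p)
      refine Finset.mem_image.mpr ⟨p.1 - 1, Finset.mem_range.mpr (by omega), ?_⟩
      exact Prod.ext_iff.mpr ⟨by omega, by omega⟩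
    have := Finset.card_le_card hsub
    have := Finset.card_image_le (s := Finset.range (n-1)) (f := fun i => (i+1, i+2))
    rw [Finset.card_range] at this
    omega
  -- minimal non-staircase row r
  have hNSim : (NS.image Prod.fst).Nonempty := hNSne.image _
  set r := (NS.image Prod.fst).min' hNSim with hrdef
  obtain ⟨p0, hp0NS, hp0r⟩ := Finset.mem_image.mp ((NS.image Prod.fst).min'_mem hNSim)
  have hp0F := (Finset.mem_filter.mp hp0NS).1
  have hp0ns := (Finset.mem_filter.mp hp0NS).2
  have hp0A := (hFA p0).mp hp0F
  have hp0Q := hQ p0 hp0A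
  have hrmin : ∀ q ∈ NS, r ≤ q.1 := by
    intro q hq
    exact (NS.image Prod.fst).min'_le q.1 (Finset.mem_image.mpr ⟨q, hq, rfl⟩)
  have hr1 : 1 ≤ r := by obtain ⟨h1, _, _⟩ := hp0Q; omega
  have hrn : r ≤ n := by obtain ⟨_, h2, h3⟩ := hp0Q; omega
  -- all rows ≤ r+1
  have hrows : ∀ q ∈ A, q.1 ≤ r + 1 := by
    intro q hq
    by_contra hc
    apply hnc p0 hp0A q hq
    exact ⟨hp0Q, hQ q hq, by omega, by omega, fun h _ => absurd h (by omega)⟩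
  have hlow : ∀ q ∈ A, q.1 < r → q.2 = q.1 + 1 := by
    intro q hq hqr
    by_contra hc
    have : q ∈ NS := Finset.mem_filter.mpr ⟨(hFA q).mpr hq, hc⟩
    exact absurd (hrmin q this) (by omega)
  -- partition
  set S := F.filter (fun p => p.1 < r) with hSdef
  set Bf := F.filter (fun p => p.1 = r) with hBfdef
  set Cf := F.filter (fun p => p.1 = r + 1) with hCfdef
  have hsplit : F = S ∪ Bf ∪ Cf := by
    ext q
    simp only [hSdef, hBfdef, hCfdef, Finset.mem_union, Finset.mem_filter]
    constructor
    · intro hq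
      have := hrows q ((hFA q).mp hq)
      rcases Nat.lt_trichotomy q.1 r with h | h | h
      · exact Or.inl (Or.inl ⟨hq, h⟩)
      · exact Or.inl (Or.inr ⟨hq, h⟩)
      · exact Or.inr ⟨hq, by omega⟩
    · rintro ((⟨h, _⟩ | ⟨h, _⟩) | ⟨h, _⟩) <;> exact h
  have hdisj1 : Disjoint S Bf := by
    simp only [Finset.disjoint_left, hSdef, hBfdef, Finset.mem_filter]
    rintro a ⟨_, h1⟩ ⟨_, h2⟩
    omega
  have hdisj2 : Disjoint (S ∪ Bf) Cf := by
    simp only [Finset.disjoint_left, hSdef, hBfdef, hCfdef, Finset.mem_union, Finset.mem_filter]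
    rintro a (⟨_, h1⟩ | ⟨_, h1⟩) ⟨_, h2⟩ <;> omega
  have hcards : S.card + Bf.card + Cf.card = n := by
    rw [← hFcard, hsplit, Finset.card_union_of_disjoint hdisj2,
      Finset.card_union_of_disjoint hdisj1]
  -- S is inside the staircase
  have hSsub : S ⊆ stairF r := by
    intro q hq
    obtain ⟨hqF, hqr⟩ := Finset.mem_filter.mp hq
    have hqA := (hFA q).mp hqF
    have hst := hlow q hqA hqr
    obtain ⟨h1, h2, h3⟩ := hQ q hqA
    refine Finset.mem_image.mpr ⟨q.1 - 1, Finset.mem_range.mpr (by omega), ?_⟩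
    exact Prod.ext_iff.mpr ⟨by omega, by omega⟩
  have hScard : S.card ≤ r - 1 := stairF_card r ▸ Finset.card_le_card hSsub
  -- offset sets
  set M := n - r with hMdef
  set B := Bf.image (fun p => p.2 - r) with hBdef
  set C := Cf.image (fun p => p.2 - (r+1)) with hCdef
  have hBmem : ∀ d ∈ B, (r, r + d) ∈ A ∧ d ≤ M := by
    intro d hd
    obtain ⟨p, hp, hpd⟩ := Finset.mem_image.mp hd
    obtain ⟨hpF, hpr⟩ := Finset.mem_filter.mp hp
    have hpA := (hFA p).mp hpF
    obtain ⟨h1, h2, h3⟩ := hQ p hpA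
    have hpeq : p = (r, r + d) := Prod.ext_iff.mpr ⟨hpr, by omega⟩
    exact ⟨hpeq ▸ hpA, by omega⟩
  have hCmem : ∀ e ∈ C, (r + 1, r + 1 + e) ∈ A ∧ e < M := by
    intro e he
    obtain ⟨p, hp, hpe⟩ := Finset.mem_image.mp he
    obtain ⟨hpF, hpr⟩ := Finset.mem_filter.mp hp
    have hpA := (hFA p).mp hpF
    obtain ⟨h1, h2, h3⟩ := hQ p hpA
    have hpeq : p = (r + 1, r + 1 + e) := Prod.ext_iff.mpr ⟨hpr, by omega⟩
    exact ⟨hpeq ▸ hpA, by omega⟩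
  have hBcard : B.card = Bf.card := by
    apply Finset.card_image_of_injOn
    intro p hp q hq hpq
    have hpq' : p.2 - r = q.2 - r := hpq
    obtain ⟨_, hpr⟩ := Finset.mem_filter.mp hp
    obtain ⟨_, hqr⟩ := Finset.mem_filter.mp hq
    have h2 := (hQ p ((hFA p).mp (Finset.mem_filter.mp hp).1)).2.1
    have h2' := (hQ q ((hFA q).mp (Finset.mem_filter.mp hq).1)).2.1
    exact Prod.ext_iff.mpr ⟨by omega, by omega⟩
  have hCcard : C.card = Cf.card := by
    apply Finset.card_image_of_injOn
    intro p hp q hq hpq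
    have hpq' : p.2 - (r+1) = q.2 - (r+1) := hpq
    obtain ⟨_, hpr⟩ := Finset.mem_filter.mp hp
    obtain ⟨_, hqr⟩ := Finset.mem_filter.mp hq
    have h2 := (hQ p ((hFA p).mp (Finset.mem_filter.mp hp).1)).2.1
    have h2' := (hQ q ((hFA q).mp (Finset.mem_filter.mp hq).1)).2.1
    exact Prod.ext_iff.mpr ⟨by omega, by omega⟩
  have hBsub : B ⊆ Finset.range (M + 1) := by
    intro d hd
    exact Finset.mem_range.mpr (by have := (hBmem d hd).2; omega)
  have hCsub : C ⊆ Finset.range M := by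
    intro e he
    exact Finset.mem_range.mpr (hCmem e he).2
  have hcompat : ∀ d ∈ B, ∀ e ∈ C, Icompat d e := by
    intro d hd e he
    obtain ⟨hpA, hdM⟩ := hBmem d hd
    obtain ⟨hqA, heM⟩ := hCmem e he
    have hQp := hQ _ hpA
    have hQq := hQ _ hqA
    by_contra hni
    rw [Icompat] at hni
    push_neg at hni
    obtain ⟨hd1, hd2⟩ := hni
    apply hnc _ hpA _ hqA
    rcases Nat.lt_or_ge d 2 with hdlt | hdge
    · -- d = 0 : Comp holds trivially
      have hd0 : d = 0 := by omega
      exact ⟨hQp, hQq, by omega, show r + d ≠ r + 1 by omega,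
        fun _ h => absurd (show r + 2 ≤ r + d from h) (by omega)⟩
    · have hX := hd2 hdge
      refine ⟨hQp, hQq, by omega, show r + d ≠ r + 1 by omega, fun _ _ => ?_⟩
      show AdjC r (r + d) (r + 1 + e)
      rw [AdjC]
      omega
  -- apply the key lemma
  obtain ⟨hle, heqc⟩ := key M B C hBsub hCsub hcompat
  have hMr : r - 1 + (M + 1) = n := by omega
  have hsum : B.card + C.card = M + 1 := by omega
  obtain ⟨t, htM, hBeq, hCeq⟩ := heqc hsum
  have hSeq : S = stairF r := by
    apply Finset.eq_of_subset_of_card_le hSsub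
    rw [stairF_card]
    omega
  -- reconstruct Bf and Cf
  have hBfeq : Bf = (BF M t).image (fun d => (r, r + d)) := by
    have hcg : Bf.image ((fun d => (r, r + d)) ∘ (fun p : ℕ × ℕ => p.2 - r)) = Bf.image id := by
      apply Finset.image_congr
      intro p hp
      obtain ⟨hpF, hpr⟩ := Finset.mem_filter.mp (Finset.mem_coe.mp hp)
      have h2 := (hQ p ((hFA p).mp hpF)).2.1
      exact Prod.ext_iff.mpr ⟨by simp [hpr], by simp; omega⟩
    rw [Finset.image_id] at hcg
    rw [← hBeq, hBdef, Finset.image_image, hcg]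
  have hCfeq : Cf = (CF M t).image (fun e => (r + 1, r + 1 + e)) := by
    have hcg : Cf.image ((fun e => (r + 1, r + 1 + e)) ∘ (fun p : ℕ × ℕ => p.2 - (r + 1)))
        = Cf.image id := by
      apply Finset.image_congr
      intro p hp
      obtain ⟨hpF, hpr⟩ := Finset.mem_filter.mp (Finset.mem_coe.mp hp)
      have h2 := (hQ p ((hFA p).mp hpF)).2.1
      exact Prod.ext_iff.mpr ⟨by simp [hpr], by simp; omega⟩
    rw [Finset.image_id] at hcg
    rw [← hCeq, hCdef, Finset.image_image, hcg]
  refine ⟨r, t, hr1, hrn, htM, ?_⟩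
  rw [← hfin.coe_toFinset, ← hFdef, hsplit, hSeq, hBfeq, hCfeq]
  rfl


theorem mem_famF {n r t : ℕ} {p : ℕ × ℕ} : p ∈ famF n r t ↔
    (1 ≤ p.1 ∧ p.1 < r ∧ p.2 = p.1 + 1) ∨
    (p.1 = r ∧ r ≤ p.2 ∧ p.2 ≤ r + (n-r) ∧
      (((p.2-r) % 2 = 1 ∧ p.2-r < 2*t ∧ p.2-r < 2*(n-r-t)+2) ∨ 2*t ≤ p.2-r)) ∨
    (p.1 = r+1 ∧ r+1 ≤ p.2 ∧ p.2 < r+1 + (n-r) ∧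
      (((p.2-(r+1)) % 2 = 1 ∧ p.2-(r+1) < 2*t ∧ p.2-(r+1) < 2*(n-r-t)) ∨
        2*(n-r-t) ≤ p.2-(r+1))) := by
  simp only [famF, Finset.mem_union, stairF, BF, CF, Finset.mem_image, Finset.mem_filter,
    Finset.mem_range]
  constructor
  · rintro ((⟨i, hi, rfl⟩ | ⟨d, hd, rfl⟩) | ⟨e, he, rfl⟩) <;> dsimp only <;> omega
  · rintro (⟨h1, h2, h3⟩ | ⟨h1, h2, h3, h4⟩ | ⟨h1, h2, h3, h4⟩)
    · exact Or.inl (Or.inl ⟨p.1 - 1, by omega, Prod.ext_iff.mpr ⟨by omega, by omega⟩⟩)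
    · exact Or.inl (Or.inr ⟨p.2 - r, by omega, Prod.ext_iff.mpr ⟨by omega, by omega⟩⟩)
    · exact Or.inr ⟨p.2 - (r+1), by omega, Prod.ext_iff.mpr ⟨by omega, by omega⟩⟩

theorem famF_first_le {n r t : ℕ} {p : ℕ × ℕ} (hp : p ∈ famF n r t) : p.1 ≤ r + 1 := by
  rcases mem_famF.mp hp with h | h | h <;> omega

theorem famF_first_le' {n r : ℕ} {p : ℕ × ℕ} (hp : p ∈ famF n r 0) : p.1 ≤ r := by
  rcases mem_famF.mp hp with h | h | h <;> omega

theorem famF_top {n r t : ℕ} (hr : 1 ≤ r) (ht : 1 ≤ t) (htM : t ≤ n - r) :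
    ∃ p ∈ famF n r t, p.1 = r + 1 := by
  by_cases h : t = n - r
  · exact ⟨(r+1, r+1), mem_famF.mpr (Or.inr (Or.inr (by dsimp only; omega))), rfl⟩
  · exact ⟨(r+1, r+2), mem_famF.mpr (Or.inr (Or.inr (by dsimp only; omega))), rfl⟩

theorem famF_topcount {n r t : ℕ} (ht : t ≤ n - r) :
    ((famF n r t).filter (fun p => p.1 = r + 1)).card = t := by
  have hinj3 : Function.Injective (fun e : ℕ => (r+1, r+1+e)) := by
    intro a b h
    have := (Prod.mk.injEq _ _ _ _ ▸ h).2
    omega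
  have hnet : (famF n r t).filter (fun p => p.1 = r + 1)
      = (CF (n-r) t).image (fun e => (r+1, r+1+e)) := by
    ext q
    simp only [Finset.mem_filter, Finset.mem_image, CF, Finset.mem_range, mem_famF]
    constructor
    · rintro ⟨(h | h | h), hq1⟩
      · omega
      · omega
      · exact ⟨q.2 - (r+1), by omega, Prod.ext_iff.mpr ⟨by omega, by omega⟩⟩
    · rintro ⟨e, he, rfl⟩
      dsimp only
      omega
  rw [hnet, Finset.card_image_of_injective _ hinj3]
  exact CF_card _ _ ht

theorem famF_shift {n r : ℕ} (hr : 2 ≤ r) (hrn : r ≤ n) :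
    famF n r 0 = famF n (r-1) (n - (r-1)) := by
  ext p
  rw [mem_famF, mem_famF]
  omega

def idx (n : ℕ) : Finset (ℕ × ℕ) :=
  insert (1, 0)
    ((Finset.Icc 1 (n-1)).biUnion (fun r => (Finset.Icc 1 (n-r)).image (fun t => (r, t))))

theorem mem_idx {n : ℕ} {r t : ℕ} : (r, t) ∈ idx n ↔
    (r = 1 ∧ t = 0) ∨ (1 ≤ r ∧ r ≤ n - 1 ∧ 1 ≤ t ∧ t ≤ n - r) := by
  simp only [idx, Finset.mem_insert, Finset.mem_biUnion, Finset.mem_Icc, Finset.mem_image,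
    Prod.mk.injEq]
  constructor
  · rintro (⟨h1, h2⟩ | ⟨r', ⟨hr1, hr2⟩, t', ⟨ht1, ht2⟩, hre, hte⟩)
    · exact Or.inl ⟨h1, h2⟩
    · subst hre hte; exact Or.inr ⟨hr1, hr2, ht1, ht2⟩
  · rintro (⟨h1, h2⟩ | ⟨h1, h2, h3, h4⟩)
    · exact Or.inl ⟨h1, h2⟩
    · exact Or.inr ⟨r, ⟨h1, h2⟩, t, ⟨h3, h4⟩, rfl, rfl⟩

theorem sum_shift (m : ℕ) :
    ∑ r ∈ Finset.Icc 1 m, (m + 1 - r) = (∑ j ∈ Finset.range m, j) + m := by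
  have hIcc : Finset.Icc 1 m = (Finset.range m).image (fun i => i + 1) := by
    ext x
    simp only [Finset.mem_Icc, Finset.mem_image, Finset.mem_range]
    constructor
    · intro h; exact ⟨x - 1, by omega, by omega⟩
    · rintro ⟨i, hi, rfl⟩; omega
  rw [hIcc, Finset.sum_image (by intro x _ y _ h; simp only at h; omega)]
  have h1 : ∀ i ∈ Finset.range m, m + 1 - (i + 1) = (m - 1 - i) + 1 := by
    intro i hi; have := Finset.mem_range.mp hi; omega
  rw [Finset.sum_congr rfl h1, Finset.sum_add_distrib,
    Finset.sum_range_reflect (fun j => j) m]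
  simp

theorem idx_card {n : ℕ} (hn : 2 ≤ n) : (idx n).card = n * (n - 1) / 2 + 1 := by
  obtain ⟨m, rfl⟩ : ∃ m, n = m + 1 := ⟨n - 1, by omega⟩
  have hm1 : 1 ≤ m := by omega
  have hnotmem : ((1:ℕ), (0:ℕ)) ∉ (Finset.Icc 1 (m+1-1)).biUnion
      (fun r => (Finset.Icc 1 (m+1-r)).image (fun t => (r, t))) := by
    intro hmem
    obtain ⟨r, hr, hmem2⟩ := Finset.mem_biUnion.mp hmem
    obtain ⟨t, ht, heq⟩ := Finset.mem_image.mp hmem2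
    have h1 : t = 0 := (Prod.ext_iff.mp heq).2
    have h2 := (Finset.mem_Icc.mp ht).1
    omega
  rw [idx, Finset.card_insert_of_notMem hnotmem, Finset.card_biUnion (by
    intro x _ y _ hxy
    simp only [Finset.disjoint_left]
    intro a ha hb
    obtain ⟨t, _, heq⟩ := Finset.mem_image.mp ha
    obtain ⟨t', _, heq'⟩ := Finset.mem_image.mp hb
    exact hxy ((Prod.ext_iff.mp heq).1.trans (Prod.ext_iff.mp heq').1.symm))]
  simp only [Nat.add_sub_cancel]
  have hcards : ∀ r ∈ Finset.Icc 1 m,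
      ((Finset.Icc 1 (m+1-r)).image (fun t => (r, t))).card = m + 1 - r := by
    intro r _
    rw [Finset.card_image_of_injective _ (fun a b h => (Prod.mk.injEq _ _ _ _ ▸ h).2),
      Nat.card_Icc]
    omega
  rw [Finset.sum_congr rfl hcards, sum_shift m]
  have hg : (∑ j ∈ Finset.range m, j) * 2 = m * (m - 1) := Finset.sum_range_id_mul_two m
  have hprod : (m + 1) * m = m * (m - 1) + 2 * m := by
    obtain ⟨k, rfl⟩ : ∃ k, m = k + 1 := ⟨m - 1, by omega⟩
    simp only [Nat.add_sub_cancel]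
    ring
  have hkey : (m + 1) * m = 2 * ((∑ j ∈ Finset.range m, j) + m) := by
    rw [hprod, ← hg]; ring
  rw [hkey, Nat.mul_div_cancel_left _ (by norm_num : (0:ℕ) < 2)]


theorem fam_injOn (n : ℕ) :
    Set.InjOn (fun rt : ℕ × ℕ => ((famF n rt.1 rt.2 : Finset (ℕ × ℕ)) : Set (ℕ × ℕ)))
      ↑(idx n) := by
  rintro ⟨r, t⟩ h ⟨r', t'⟩ h' heq
  have hF : famF n r t = famF n r' t' := Finset.coe_inj.mp heq
  have hm := mem_idx.mp (Finset.mem_coe.mp h)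
  have hm' := mem_idx.mp (Finset.mem_coe.mp h')
  rcases hm with ⟨hr1, ht0⟩ | ⟨hr1, hrn, ht1, htM⟩
  · rcases hm' with ⟨hr1', ht0'⟩ | ⟨hr1', hrn', ht1', htM'⟩
    · subst hr1 ht0 hr1' ht0'; rfl
    · exfalso
      obtain ⟨p, hp, hp1⟩ := famF_top (n := n) hr1' ht1' htM'
      rw [← hF] at hp
      subst hr1 ht0
      have := famF_first_le' hp
      omega
  · rcases hm' with ⟨hr1', ht0'⟩ | ⟨hr1', hrn', ht1', htM'⟩
    · exfalso
      obtain ⟨p, hp, hp1⟩ := famF_top (n := n) hr1 ht1 htM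
      rw [hF] at hp
      subst hr1' ht0'
      have := famF_first_le' hp
      omega
    · have hrr : r = r' := by
        obtain ⟨p, hp, hp1⟩ := famF_top (n := n) hr1 ht1 htM
        obtain ⟨q, hq, hq1⟩ := famF_top (n := n) hr1' ht1' htM'
        rw [hF] at hp
        rw [← hF] at hq
        have h1 := famF_first_le hp
        have h2 := famF_first_le hq
        omega
      subst hrr
      have htt : t = t' := by
        have h1 := famF_topcount (n := n) (r := r) (t := t) htM
        have h2 := famF_topcount (n := n) (r := r) (t := t') htM'
        rw [hF] at h1
        omega
      subst htt; rfl

end CA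

open CA in
/-- the number of antichains of cardinality `n` in the graded poset
`(Q_n, ≺)` is exactly `n(n-1)/2 + 1`. -/
theorem count_antichains (n : ℕ) (hn : 2 ≤ n) :
    Set.ncard {A : Set (ℕ × ℕ) | IsPrecAntichain n A ∧ A.ncard = n} =
      n * (n - 1) / 2 + 1 := by
  have hset : {A : Set (ℕ × ℕ) | IsPrecAntichain n A ∧ A.ncard = n}
      = (fun rt : ℕ × ℕ => ((famF n rt.1 rt.2 : Finset (ℕ × ℕ)) : Set (ℕ × ℕ))) '' ↑(idx n) := by
    ext A
    simp only [Set.mem_setOf_eq, Set.mem_image, Finset.mem_coe]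
    constructor
    · rintro ⟨hA, hcard⟩
      obtain ⟨r, t, hr1, hrn, htM, hAeq⟩ := classify n hn A hA hcard
      by_cases ht0 : t = 0
      · subst ht0
        by_cases hr1' : r = 1
        · exact ⟨(1, 0), mem_idx.mpr (Or.inl ⟨rfl, rfl⟩), by dsimp only; rw [hAeq, hr1']⟩
        · refine ⟨(r - 1, n - (r - 1)), mem_idx.mpr (Or.inr (by omega)), ?_⟩
          dsimp only
          rw [hAeq, famF_shift (by omega) hrn]
      · refine ⟨(r, t), mem_idx.mpr (Or.inr (by omega)), ?_⟩
        dsimp only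
        rw [hAeq]
    · rintro ⟨⟨r, t⟩, hmem, rfl⟩
      have hc : 1 ≤ r ∧ r ≤ n ∧ t ≤ n - r := by
        rcases mem_idx.mp hmem with ⟨h1, h2⟩ | ⟨h1, h2, h3, h4⟩ <;> omega
      dsimp only
      refine ⟨⟨fun p hp => famF_qmem n r t hc.1 hc.2.1 p (Finset.mem_coe.mp hp),
        fun p hp q hq _ hprec => famF_antichain n r t hc.1 hc.2.1 p (Finset.mem_coe.mp hp) q
          (Finset.mem_coe.mp hq) (prec_iff_comp.mp hprec)⟩, ?_⟩
      rw [Set.ncard_coe_finset, famF_card n r t hc.1 hc.2.1 hc.2.2]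
  rw [hset, Set.ncard_image_of_injOn (fam_injOn n), Set.ncard_coe_finset, idx_card hn]
end

section
/- The antichains A(i,x) for 1 ≤ i ≤ n−1, i < x ≤ n are pairwise distinct and distinct from {(1,k) : 1 ≤ k ≤ n}; in particular distinct pairs (i,x) ≠ (i',x') give A(i,x) ≠ A(i',x'). -/
/-- The antichain `A(i,x)` of the paper (candidate generalized tilting module in the
`i`-th tier): `{(j,j+1) : 1 ≤ j ≤ i-1} ∪ {(i,x),(i+1,x)}`, together with the elements
`(i,k)` for `i+1 ≤ k ≤ x-1` with `k ≡ i+1 (mod 2)`, the elements `(i+1,ℓ)` for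
`i+2 ≤ ℓ ≤ x-1` with `ℓ ≡ i (mod 2)`, and the tail `(i,k)` (resp. `(i+1,k)`) for
`x+1 ≤ k ≤ n` when `x ≡ i (mod 2)` (resp. `x ≢ i (mod 2)`). -/
def Afam (n i x : ℕ) : Set (ℕ × ℕ) :=
  {p : ℕ × ℕ | p.2 = p.1 + 1 ∧ 1 ≤ p.1 ∧ p.1 < i} ∪
  {(i, x), (i + 1, x)} ∪
  {p : ℕ × ℕ | p.1 = i ∧ i + 1 ≤ p.2 ∧ p.2 < x ∧ p.2 % 2 = (i + 1) % 2} ∪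
  {p : ℕ × ℕ | p.1 = i + 1 ∧ i + 2 ≤ p.2 ∧ p.2 < x ∧ p.2 % 2 = i % 2} ∪
  (if x % 2 = i % 2 then {p : ℕ × ℕ | p.1 = i ∧ x + 1 ≤ p.2 ∧ p.2 ≤ n}
   else {p : ℕ × ℕ | p.1 = i + 1 ∧ x + 1 ≤ p.2 ∧ p.2 ≤ n})

set_option maxHeartbeats 1000000 in
private lemma Afam_mem_iff (n i x a b : ℕ) : (a, b) ∈ Afam n i x ↔
      (b = a + 1 ∧ 1 ≤ a ∧ a < i) ∨ (a = i ∧ b = x) ∨ (a = i + 1 ∧ b = x) ∨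
      (a = i ∧ i + 1 ≤ b ∧ b < x ∧ b % 2 = (i + 1) % 2) ∨
      (a = i + 1 ∧ i + 2 ≤ b ∧ b < x ∧ b % 2 = i % 2) ∨
      (x % 2 = i % 2 ∧ a = i ∧ x + 1 ≤ b ∧ b ≤ n) ∨
      (¬ x % 2 = i % 2 ∧ a = i + 1 ∧ x + 1 ≤ b ∧ b ≤ n) := by
  by_cases h : x % 2 = i % 2 <;>
    simp only [Afam, h, if_true, if_false, not_true, not_false_iff, true_and, false_and,
      or_false, Set.mem_union, Set.mem_setOf_eq, Set.mem_insert_iff,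
      Set.mem_singleton_iff, Prod.mk.injEq] <;>
    tauto

private lemma Afam_aux (n i x i' x' : ℕ) (hi : 1 ≤ i) (hix : i < x)
    (hi' : 1 ≤ i') (hix' : i' < x') (hxn' : x' ≤ n)
    (hlt : i < i' ∨ (i = i' ∧ x < x')) : Afam n i x ≠ Afam n i' x' := by
  intro heq
  rcases hlt with hlt | ⟨rfl, hlt⟩
  · have hw : (i' + 1, x') ∈ Afam n i' x' := by
      rw [Afam_mem_iff]; exact Or.inr (Or.inr (Or.inl ⟨rfl, rfl⟩))
    rw [← heq, Afam_mem_iff] at hw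
    rcases hw with h | h | h | h | h | h | h <;> omega
  · by_cases hp : x % 2 = i % 2
    · have hw : (i + 1, x') ∈ Afam n i x' := by
        rw [Afam_mem_iff]; exact Or.inr (Or.inr (Or.inl ⟨rfl, rfl⟩))
      rw [← heq, Afam_mem_iff] at hw
      rcases hw with h | h | h | h | h | h | h <;> omega
    · have hw : (i, x') ∈ Afam n i x' := by
        rw [Afam_mem_iff]; exact Or.inr (Or.inl ⟨rfl, rfl⟩)
      rw [← heq, Afam_mem_iff] at hw
      rcases hw with h | h | h | h | h | h | h <;> omega

/-- the antichains `A(i,x)` for `1 ≤ i ≤ n-1`, `i < x ≤ n` are pairwise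
distinct and distinct from `{(1,k) : 1 ≤ k ≤ n}`. -/
theorem Afam_pairwise_distinct (n : ℕ) (hn : 2 ≤ n) :
    (∀ i x i' x' : ℕ, 1 ≤ i → i ≤ n - 1 → i < x → x ≤ n →
        1 ≤ i' → i' ≤ n - 1 → i' < x' → x' ≤ n →
        (i, x) ≠ (i', x') → Afam n i x ≠ Afam n i' x') ∧
    (∀ i x : ℕ, 1 ≤ i → i ≤ n - 1 → i < x → x ≤ n →
        Afam n i x ≠ {p : ℕ × ℕ | p.1 = 1 ∧ 1 ≤ p.2 ∧ p.2 ≤ n}) := by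
  constructor
  · intro i x i' x' hi hin hix hxn hi' hin' hix' hxn' hne
    rw [Ne, Prod.mk.injEq, not_and_or] at hne
    rcases Nat.lt_trichotomy i i' with hc | hc | hc
    · exact Afam_aux n i x i' x' hi hix hi' hix' hxn' (Or.inl hc)
    · subst hc
      rcases Nat.lt_trichotomy x x' with hx | hx | hx
      · exact Afam_aux n i x i x' hi hix hi hix' hxn' (Or.inr ⟨rfl, hx⟩)
      · omega
      · exact (Afam_aux n i x' i x hi hix' hi hix hxn (Or.inr ⟨rfl, hx⟩)).symm
    · exact (Afam_aux n i' x' i x hi' hix' hi hix hxn (Or.inl hc)).symm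
  · intro i x hi hin hix hxn heq
    have hw : (i + 1, x) ∈ Afam n i x := by
      rw [Afam_mem_iff]; exact Or.inr (Or.inr (Or.inl ⟨rfl, rfl⟩))
    rw [heq] at hw
    simp only [Set.mem_setOf_eq] at hw
    omega
end
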